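/- Let F ∈ 𝓗₊ ∪ 𝓗₋ and r_F := log F*(1,1). Then T_F^-(r_F) ≤ r_F ≤ T_F(r_F); moreover for all t > r_F one has T_F(t) ≤ r_F (hence T_F(t) < t), and for all 0 < u < r_F one has T_F(u) ≥ r_F (hence T_F(u) > u). -/

import Mathlib

open MeasureTheory Filter Set Real
open scoped Classical

/-- The class 𝓗₊. -/
def HPlus (F : ℝ → ℝ → ℝ) : Prop :=
  ContinuousOn (fun p : ℝ × ℝ => F p.1 p.2) {p | 0 < p.1 ∧ 0 < p.2} ∧
  (∀ x y, 0 < x → 0 < y → 0 < F x y) ∧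
  (∀ x x' y y', 0 < x → 0 < y → x ≤ x' → y ≤ y' → F x y ≤ F x' y') ∧
  (∀ a x y, 0 < a → 0 < x → 0 < y → F (a * x) (a * y) = a * F x y) ∧
  (∀ x y, 0 < x → 0 < y → max x y ≤ F x y) ∧
  (∀ y, 0 < y →
    Tendsto (fun x => F x y) (nhdsWithin 0 (Set.Ioi 0)) (nhds y) ∧
    Tendsto (fun x => F y x) (nhdsWithin 0 (Set.Ioi 0)) (nhds y))

/-- The class 𝓗₋. -/
def HMinus (F : ℝ → ℝ → ℝ) : Prop :=
  ContinuousOn (fun p : ℝ × ℝ => F p.1 p.2) {p | 0 < p.1 ∧ 0 < p.2} ∧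
  (∀ x y, 0 < x → 0 < y → 0 < F x y) ∧
  (∀ x x' y y', 0 < x → 0 < y → x ≤ x' → y ≤ y' → F x y ≤ F x' y') ∧
  (∀ a x y, 0 < a → 0 < x → 0 < y → F (a * x) (a * y) = a * F x y) ∧
  (∀ x y, 0 < x → 0 < y → F x y ≤ min x y) ∧
  (∀ y, 0 < y →
    Tendsto (fun x => F x y) atTop (nhds y) ∧
    Tendsto (fun x => F y x) atTop (nhds y))

/-- The associated element F* of 𝓗₊. -/
noncomputable def Fstar (F : ℝ → ℝ → ℝ) : ℝ → ℝ → ℝ :=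
  if HPlus F then F else fun x y => (F x⁻¹ y⁻¹)⁻¹

lemma hplus_fstar (F : ℝ → ℝ → ℝ) (hF : HPlus F ∨ HMinus F) : HPlus (Fstar F) := by
  by_cases h : HPlus F
  · rw [Fstar, if_pos h]; exact h
  · have hm : HMinus F := hF.resolve_left h
    rw [Fstar, if_neg h]
    obtain ⟨hc, hpos, hmono, hhom, hmin, hlim⟩ := hm
    refine ⟨?_, ?_, ?_, ?_, ?_, ?_⟩
    · have hmap : MapsTo (fun p : ℝ × ℝ => (p.1⁻¹, p.2⁻¹))
        {p : ℝ × ℝ | 0 < p.1 ∧ 0 < p.2} {p : ℝ × ℝ | 0 < p.1 ∧ 0 < p.2} :=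
        fun p hp => ⟨inv_pos.2 hp.1, inv_pos.2 hp.2⟩
      have hci : ContinuousOn (fun p : ℝ × ℝ => (p.1⁻¹, p.2⁻¹))
          {p : ℝ × ℝ | 0 < p.1 ∧ 0 < p.2} :=
        (continuousOn_fst.inv₀ fun p hp => ne_of_gt hp.1).prodMk
          (continuousOn_snd.inv₀ fun p hp => ne_of_gt hp.2)
      exact (hc.comp hci hmap).inv₀ fun p hp =>
        ne_of_gt (hpos _ _ (inv_pos.2 hp.1) (inv_pos.2 hp.2))
    · exact fun x y hx hy => inv_pos.2 (hpos _ _ (inv_pos.2 hx) (inv_pos.2 hy))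
    · intro x x' y y' hx hy hxx hyy
      have hx' : 0 < x' := hx.trans_le hxx
      have hy' : 0 < y' := hy.trans_le hyy
      have h1 : F x'⁻¹ y'⁻¹ ≤ F x⁻¹ y⁻¹ :=
        hmono _ _ _ _ (inv_pos.2 hx') (inv_pos.2 hy')
          (inv_anti₀ hx hxx) (inv_anti₀ hy hyy)
      exact inv_anti₀ (hpos _ _ (inv_pos.2 hx') (inv_pos.2 hy')) h1
    · intro a x y ha hx hy
      show (F (a*x)⁻¹ (a*y)⁻¹)⁻¹ = a * (F x⁻¹ y⁻¹)⁻¹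
      rw [mul_inv, mul_inv, hhom a⁻¹ x⁻¹ y⁻¹ (inv_pos.2 ha) (inv_pos.2 hx) (inv_pos.2 hy),
        mul_inv, inv_inv]
    · intro x y hx hy
      have h1 : F x⁻¹ y⁻¹ ≤ (max x y)⁻¹ := by
        refine (hmin _ _ (inv_pos.2 hx) (inv_pos.2 hy)).trans ?_
        rcases le_total x y with hxy | hxy
        · rw [max_eq_right hxy]; exact min_le_right _ _
        · rw [max_eq_left hxy]; exact min_le_left _ _
      have := inv_anti₀ (hpos _ _ (inv_pos.2 hx) (inv_pos.2 hy)) h1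
      rwa [inv_inv] at this
    · intro y hy
      constructor
      · have h1 := (hlim y⁻¹ (inv_pos.2 hy)).1
        have h2 : Tendsto (fun x : ℝ => F x⁻¹ y⁻¹) (nhdsWithin 0 (Set.Ioi 0)) (nhds y⁻¹) :=
          h1.comp tendsto_inv_nhdsGT_zero
        have h3 := h2.inv₀ (ne_of_gt (inv_pos.2 hy))
        simpa using h3
      · have h1 := (hlim y⁻¹ (inv_pos.2 hy)).2
        have h2 : Tendsto (fun x : ℝ => F y⁻¹ x⁻¹) (nhdsWithin 0 (Set.Ioi 0)) (nhds y⁻¹) :=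
          h1.comp tendsto_inv_nhdsGT_zero
        have h3 := h2.inv₀ (ne_of_gt (inv_pos.2 hy))
        simpa using h3

/-- T_F(t) := sup { z : F*(e^{-t}, e^{-z}) ≥ 1 }. -/
noncomputable def TF (F : ℝ → ℝ → ℝ) (t : ℝ) : ℝ :=
  sSup {z : ℝ | 1 ≤ Fstar F (Real.exp (-t)) (Real.exp (-z))}

/-- T_F^-(t) := inf { z : F*(e^{-t}, e^{-z}) ≤ 1 }. -/
noncomputable def TFminus (F : ℝ → ℝ → ℝ) (t : ℝ) : ℝ :=
  sInf {z : ℝ | Fstar F (Real.exp (-t)) (Real.exp (-z)) ≤ 1}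

/-- r_F := log F*(1,1). -/
noncomputable def rF (F : ℝ → ℝ → ℝ) : ℝ := Real.log (Fstar F 1 1)

/-- Γ_F^{(a,b)} := ∫₀^∞ t^a (T_F(t))^b dt, as an extended nonnegative real. -/
noncomputable def Gamma (F : ℝ → ℝ → ℝ) (a b : ℝ) : ENNReal :=
  ∫⁻ t in Set.Ioi (0 : ℝ), ENNReal.ofReal (t ^ a * (TF F t) ^ b)

/-- F^#(x,y) := F(y,x). -/
def Fsharp (F : ℝ → ℝ → ℝ) : ℝ → ℝ → ℝ := fun x y => F y x

/-- T_F^-(r_F) ≤ r_F ≤ T_F(r_F); for t > r_F, T_F(t) ≤ r_F (hence T_F(t) < t);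
for 0 < u < r_F, T_F(u) ≥ r_F (hence T_F(u) > u). -/
theorem stmt6 (F : ℝ → ℝ → ℝ) (hF : HPlus F ∨ HMinus F) :
    TFminus F (rF F) ≤ rF F ∧ rF F ≤ TF F (rF F) ∧
    (∀ t : ℝ, rF F < t → TF F t ≤ rF F ∧ TF F t < t) ∧
    (∀ u : ℝ, 0 < u → u < rF F → rF F ≤ TF F u ∧ u < TF F u) := by
  obtain ⟨_, hpos, hmono, hhom, hmax, hlim⟩ := hplus_fstar F hF
  have h11 : 1 ≤ Fstar F 1 1 := by simpa using hmax 1 1 one_pos one_pos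
  have hG11 : 0 < Fstar F 1 1 := lt_of_lt_of_le one_pos h11
  have hr0 : 0 ≤ rF F := Real.log_nonneg h11
  have key : ∀ s : ℝ, Fstar F (Real.exp (-s)) (Real.exp (-s)) = Real.exp (rF F - s) := by
    intro s
    have h1 : Fstar F (Real.exp (-s) * 1) (Real.exp (-s) * 1) = Real.exp (-s) * Fstar F 1 1 :=
      hhom (Real.exp (-s)) 1 1 (Real.exp_pos _) one_pos one_pos
    rw [mul_one] at h1
    have h2 : Real.exp (rF F) = Fstar F 1 1 := Real.exp_log hG11
    rw [h1, ← h2, ← Real.exp_add]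
    ring_nf
  -- Lemma B
  have hB : ∀ u : ℝ, 0 < u → u ≤ rF F → rF F ≤ TF F u := by
    intro u hu hur
    have hmem : rF F ∈ {z : ℝ | 1 ≤ Fstar F (Real.exp (-u)) (Real.exp (-z))} := by
      have h1 : Fstar F (Real.exp (-(rF F))) (Real.exp (-(rF F))) ≤
          Fstar F (Real.exp (-u)) (Real.exp (-(rF F))) :=
        hmono _ _ _ _ (Real.exp_pos _) (Real.exp_pos _)
          (Real.exp_le_exp.2 (by linarith)) le_rfl
      rw [key (rF F), sub_self, Real.exp_zero] at h1
      exact h1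
    have hlt1 : Real.exp (-u) < 1 := by
      rw [← Real.exp_zero]; exact Real.exp_lt_exp.2 (by linarith)
    have htd := (hlim (Real.exp (-u)) (Real.exp_pos _)).2
    have hev : ∀ᶠ x in nhdsWithin 0 (Set.Ioi 0),
        Fstar F (Real.exp (-u)) x < 1 := htd.eventually_lt_const hlt1
    obtain ⟨ε, hε, hsub⟩ := Metric.mem_nhdsWithin_iff.1 hev
    have hbdd : BddAbove {z : ℝ | 1 ≤ Fstar F (Real.exp (-u)) (Real.exp (-z))} := by
      refine ⟨-Real.log ε, fun z hz => ?_⟩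
      by_contra hc
      push_neg at hc
      have hexp : Real.exp (-z) < ε := by
        have : Real.exp (-z) < Real.exp (Real.log ε) :=
          Real.exp_lt_exp.2 (by linarith)
        rwa [Real.exp_log hε] at this
      have hmem2 : Real.exp (-z) ∈ Metric.ball (0:ℝ) ε ∩ Set.Ioi 0 := by
        constructor
        · simp [Real.dist_eq, abs_of_pos (Real.exp_pos (-z)), hexp]
        · exact Real.exp_pos _
      have := hsub hmem2
      simp only [Set.mem_setOf_eq] at this hz
      linarith
    exact le_csSup hbdd hmem
  refine ⟨?_, ?_, ?_, ?_⟩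
  · -- TFminus
    have hmem : rF F ∈ {z : ℝ | Fstar F (Real.exp (-(rF F))) (Real.exp (-z)) ≤ 1} := by
      simp only [Set.mem_setOf_eq, key (rF F), sub_self, Real.exp_zero, le_refl]
    have hbb : BddBelow {z : ℝ | Fstar F (Real.exp (-(rF F))) (Real.exp (-z)) ≤ 1} := by
      refine ⟨0, fun z hz => ?_⟩
      simp only [Set.mem_setOf_eq] at hz
      have h1 : Real.exp (-z) ≤ 1 :=
        le_trans (le_trans (le_max_right _ _)
          (hmax _ _ (Real.exp_pos _) (Real.exp_pos _))) hz
      rw [← Real.exp_zero] at h1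
      linarith [Real.exp_le_exp.1 h1]
    exact csInf_le hbb hmem
  · by_cases hr : 0 < rF F
    · exact hB (rF F) hr le_rfl
    · have hrz : rF F = 0 := le_antisymm (not_lt.1 hr) hr0
      rw [hrz]
      by_cases hb : BddAbove {z : ℝ | 1 ≤ Fstar F (Real.exp (-(0:ℝ))) (Real.exp (-z))}
      · refine le_csSup hb ?_
        simp only [Set.mem_setOf_eq]
        rw [key 0, hrz, sub_zero, Real.exp_zero]
      · rw [TF, Real.sSup_of_not_bddAbove hb]
  · intro t ht
    have h1 : TF F t ≤ rF F := by
      refine Real.sSup_le (fun z hz => ?_) hr0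
      simp only [Set.mem_setOf_eq] at hz
      by_contra hc
      push_neg at hc
      set m := min t z with hm
      have hrm : rF F < m := lt_min ht hc
      have h2 : Fstar F (Real.exp (-t)) (Real.exp (-z)) ≤
          Fstar F (Real.exp (-m)) (Real.exp (-m)) :=
        hmono _ _ _ _ (Real.exp_pos _) (Real.exp_pos _)
          (Real.exp_le_exp.2 (by simp [hm]))
          (Real.exp_le_exp.2 (by simp [hm]))
      rw [key m] at h2
      have h3 : (1:ℝ) ≤ Real.exp (rF F - m) := le_trans hz h2
      rw [← Real.exp_zero] at h3
      have := Real.exp_le_exp.1 h3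
      linarith
    exact ⟨h1, h1.trans_lt ht⟩
  · intro u hu hur
    have h1 := hB u hu hur.le
    exact ⟨h1, lt_of_lt_of_le hur h1⟩
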